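/- arXiv:1305.7009 — 7 statements merged into one kernel-verified Lean document; each statement's English description precedes it below -/
import Mathlib

section
/- Let n₁, n₂, n₃ be unit vectors in ℝ³ and η ∈ (0,1]. Suppose that for each pair (ij) ∈ {(12),(13),(23)} a pairwise joint measurement G^{ij} of the noisy spin-1/2 observables along n_i and n_j with sharpness η is given. Then there exists a qubit density matrix ρ such that R₃(ρ) ≤ 1 − η/3. (No state-independent violation of the LSW inequality is possible with noisy spin-1/2 qubit observables.) -/
open Matrix ComplexOrder

noncomputable section

abbrev Mat2 := Matrix (Fin 2) (Fin 2) ℂ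

/-- Pauli matrix σ₁. -/
def σ1 : Mat2 := !![0, 1; 1, 0]
/-- Pauli matrix σ₂. -/
def σ2 : Mat2 := !![0, -Complex.I; Complex.I, 0]
/-- Pauli matrix σ₃. -/
def σ3 : Mat2 := !![1, 0; 0, -1]

/-- σ·a for a real 3-vector a. -/
def pauli (a : Fin 3 → ℝ) : Mat2 := (a 0 : ℂ) • σ1 + (a 1 : ℂ) • σ2 + (a 2 : ℂ) • σ3

/-- Euclidean inner product on ℝ³. -/
def dot3 (a b : Fin 3 → ℝ) : ℝ := a 0 * b 0 + a 1 * b 1 + a 2 * b 2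

/-- Euclidean norm on ℝ³. -/
def norm3 (a : Fin 3 → ℝ) : ℝ := Real.sqrt (dot3 a a)

/-- A qubit effect: both `E` and `I - E` positive semidefinite. -/
def IsEffect (E : Mat2) : Prop := E.PosSemidef ∧ (1 - E).PosSemidef

/-- A qubit density matrix. -/
def IsDensity (ρ : Mat2) : Prop := ρ.PosSemidef ∧ ρ.trace = 1

/-- E₊ = (1/2)(I + η σ·n). -/
def Epos (η : ℝ) (n : Fin 3 → ℝ) : Mat2 := (1/2 : ℂ) • (1 + (η : ℂ) • pauli n)
/-- E₋ = (1/2)(I - η σ·n). -/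
def Eneg (η : ℝ) (n : Fin 3 → ℝ) : Mat2 := (1/2 : ℂ) • (1 - (η : ℂ) • pauli n)

/-- A pairwise joint measurement of the noisy spin-1/2 observables along nᵢ and nⱼ. -/
def IsJointMmt (η : ℝ) (ni nj : Fin 3 → ℝ) (Gpp Gpm Gmp Gmm : Mat2) : Prop :=
  IsEffect Gpp ∧ IsEffect Gpm ∧ IsEffect Gmp ∧ IsEffect Gmm ∧
  Gpp + Gpm = Epos η ni ∧ Gmp + Gmm = Eneg η ni ∧
  Gpp + Gmp = Epos η nj ∧ Gpm + Gmm = Eneg η nj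

/-- Average anticorrelation probability R₃(ρ), given the anticorrelation effects of the
three pairwise joint measurements. -/
def R3 (ρ G12pm G12mp G13pm G13mp G23pm G23mp : Mat2) : ℝ :=
  (1/3) * ((ρ * (G12pm + G12mp)).trace.re + (ρ * (G13pm + G13mp)).trace.re +
    (ρ * (G23pm + G23mp)).trace.re)

/-- Parametric joint-measurement family. -/
def Gpp (η : ℝ) (ni nj : Fin 3 → ℝ) (α : ℝ) (a : Fin 3 → ℝ) : Mat2 :=
  (1/2 : ℂ) • (((α/2 : ℝ) : ℂ) • (1 : Mat2) + pauli ((1/2 : ℝ) • (η • (ni + nj) - a)))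
def Gpm (η : ℝ) (ni nj : Fin 3 → ℝ) (α : ℝ) (a : Fin 3 → ℝ) : Mat2 :=
  (1/2 : ℂ) • (((1 - α/2 : ℝ) : ℂ) • (1 : Mat2) + pauli ((1/2 : ℝ) • (η • (ni - nj) + a)))
def Gmp (η : ℝ) (ni nj : Fin 3 → ℝ) (α : ℝ) (a : Fin 3 → ℝ) : Mat2 :=
  (1/2 : ℂ) • (((1 - α/2 : ℝ) : ℂ) • (1 : Mat2) + pauli ((1/2 : ℝ) • (-(η • ni) + η • nj + a)))
def Gmm (η : ℝ) (ni nj : Fin 3 → ℝ) (α : ℝ) (a : Fin 3 → ℝ) : Mat2 :=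
  (1/2 : ℂ) • (((α/2 : ℝ) : ℂ) • (1 : Mat2) + pauli ((1/2 : ℝ) • (-(η • (ni + nj)) - a)))

/-- Trine directions in the ZX plane. -/
def tn1 : Fin 3 → ℝ := ![0, 0, 1]
def tn2 : Fin 3 → ℝ := ![Real.sqrt 3 / 2, 0, -(1/2)]
def tn3 : Fin 3 → ℝ := ![-(Real.sqrt 3 / 2), 0, -(1/2)]

/-- sign of a Boolean, as ±1. -/
def sgn (b : Bool) : ℝ := if b then 1 else -1

/-- m_X = Σₖ Xₖ nₖ. -/
def mvec {N : ℕ} (n : Fin N → Fin 3 → ℝ) (X : Fin N → Bool) : Fin 3 → ℝ :=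
  ∑ k, sgn (X k) • n k

/-- Joint measurability of the N noisy qubit observables. -/
def JointlyMeasurable {N : ℕ} (η : ℝ) (n : Fin N → Fin 3 → ℝ) : Prop :=
  ∃ E : (Fin N → Bool) → Mat2,
    (∀ X, IsEffect (E X)) ∧ (∑ X, E X) = 1 ∧
    (∀ k, ∑ X ∈ Finset.univ.filter (fun X => X k = true), E X = Epos η (n k)) ∧
    (∀ k, ∑ X ∈ Finset.univ.filter (fun X => X k = false), E X = Eneg η (n k))


/-! ### Auxiliary lemmas -/

lemma pauli_entries (a : Fin 3 → ℝ) :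
    pauli a = !![(a 2 : ℂ), (a 0 : ℂ) - (a 1 : ℂ) * Complex.I;
                 (a 0 : ℂ) + (a 1 : ℂ) * Complex.I, -(a 2 : ℂ)] := by
  ext i j; fin_cases i <;> fin_cases j <;> (simp [pauli, σ1, σ2, σ3]; try ring)

lemma trace_pauli (a : Fin 3 → ℝ) : (pauli a).trace = 0 := by
  simp [pauli_entries, Matrix.trace_fin_two]

lemma trace_pauli_mul (a b : Fin 3 → ℝ) :
    (pauli a * pauli b).trace = 2 * (dot3 a b : ℂ) := by
  simp [pauli_entries, Matrix.trace_fin_two, Matrix.mul_apply, Fin.sum_univ_two, dot3,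
    Complex.I_sq]
  ring_nf
  simp [Complex.I_sq]

/-- The candidate state (1/2)(I + σ·v). -/
def rho (v : Fin 3 → ℝ) : Mat2 := (1/2 : ℂ) • (1 + pauli v)

lemma trace_rho (v : Fin 3 → ℝ) : (rho v).trace = 1 := by
  simp [rho, trace_smul, trace_add, trace_pauli, Matrix.trace_one]

lemma trace_rho_mul_pauli (v m : Fin 3 → ℝ) :
    (rho v * pauli m).trace = (dot3 v m : ℂ) := by
  rw [rho, smul_mul_assoc, add_mul, one_mul, trace_smul, trace_add, trace_pauli,
    trace_pauli_mul, smul_eq_mul]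
  ring

lemma key_real (v0 v1 v2 u w A B : ℝ) (hv : v0^2+v1^2+v2^2 ≤ 1) (hu : 0 ≤ u) (hw : 0 ≤ w)
    (hAB : A^2+B^2 = u*w) : 0 ≤ u + w + v2*(u-w) + 2*v0*A + 2*v1*B := by
  nlinarith [sq_nonneg (v0*(u-w)-2*v2*A), sq_nonneg (v1*(u-w)-2*v2*B),
    sq_nonneg (2*(v0*B - v1*A)), sq_nonneg (u-w), sq_nonneg (u+w), mul_nonneg hu hw,
    sq_nonneg (v2*(u-w)+2*v0*A+2*v1*B)]

lemma rho_posSemidef (v : Fin 3 → ℝ) (hv : dot3 v v ≤ 1) : (rho v).PosSemidef := by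
  rw [posSemidef_iff_dotProduct_mulVec]
  constructor
  · ext i j
    fin_cases i <;> fin_cases j <;>
      ((simp [rho, pauli, σ1, σ2, σ3, Matrix.conjTranspose_apply, Complex.ext_iff];
        try constructor) <;> ring)
  · intro x
    rw [Complex.le_def]
    constructor
    · have h := key_real (v 0) (v 1) (v 2) ((x 0).re^2+(x 0).im^2) ((x 1).re^2+(x 1).im^2)
        ((x 0).re*(x 1).re+(x 0).im*(x 1).im) ((x 0).re*(x 1).im-(x 0).im*(x 1).re)
        (by simpa [dot3, sq] using hv) (by positivity) (by positivity) (by ring)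
      simp [rho, pauli, σ1, σ2, σ3, dotProduct, Matrix.mulVec, Fin.sum_univ_two,
        Complex.add_re, Complex.mul_re, Complex.mul_im, Matrix.one_apply]
      nlinarith [h]
    · simp [rho, pauli, σ1, σ2, σ3, dotProduct, Matrix.mulVec, Fin.sum_univ_two,
        Complex.add_im, Complex.mul_re, Complex.mul_im, Matrix.one_apply]
      ring

lemma trace_mul_re_nonneg (ρ A : Mat2) (hρ : ρ.PosSemidef) (hA : A.PosSemidef) :
    0 ≤ (ρ * A).trace.re := by
  obtain ⟨B, rfl⟩ := (by
    open scoped MatrixOrder Matrix.Norms.L2Operator in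
    exact CStarAlgebra.nonneg_iff_eq_star_mul_self.mp hA.nonneg : ∃ B : Mat2, A = Bᴴ * B)
  have h1 : (ρ * (Bᴴ * B)).trace = (B * ρ * Bᴴ).trace := by
    rw [← Matrix.mul_assoc, Matrix.trace_mul_cycle]
  have h2 : (B * ρ * Bᴴ).PosSemidef := hρ.mul_mul_conjTranspose_same B
  have h3 : (0 : ℂ) ≤ (B * ρ * Bᴴ).trace := by
    rw [Matrix.trace]
    refine Finset.sum_nonneg fun i _ => ?_
    have := h2.dotProduct_mulVec_nonneg (Pi.single i 1)
    simpa [dotProduct, Matrix.mulVec, Fin.sum_univ_two, Pi.single_apply,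
      Finset.mul_sum] using this
  rw [h1]
  exact (Complex.le_def.mp h3).1

lemma jm_diff {η : ℝ} {ni nj : Fin 3 → ℝ} {P Q R S : Mat2}
    (hJ : IsJointMmt η ni nj P Q R S) :
    P = S + ((η : ℂ)/2) • (pauli ni + pauli nj) := by
  obtain ⟨_, _, _, _, e1, _, _, e4⟩ := hJ
  have hE : Epos η ni - Eneg η nj = ((η : ℂ)/2) • (pauli ni + pauli nj) := by
    simp only [Epos, Eneg]
    module
  have hPS : P - S = Epos η ni - Eneg η nj := by
    rw [← e1, ← e4]; abel
  rw [hE] at hPS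
  linear_combination (norm := abel) hPS

lemma pair_trace_S {η : ℝ} {ni nj : Fin 3 → ℝ} (v : Fin 3 → ℝ) {P Q R S : Mat2}
    (hJ : IsJointMmt η ni nj P Q R S) :
    (rho v * (P + S)).trace
      = 2 * (rho v * S).trace + ((η/2 * (dot3 v ni + dot3 v nj) : ℝ) : ℂ) := by
  rw [jm_diff hJ]
  rw [show S + ((η : ℂ)/2) • (pauli ni + pauli nj) + S
      = S + S + ((η : ℂ)/2) • (pauli ni + pauli nj) from by abel]
  rw [Matrix.mul_add, Matrix.mul_add, Matrix.mul_smul, trace_add, trace_add, trace_smul,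
    Matrix.mul_add, trace_add, trace_rho_mul_pauli, trace_rho_mul_pauli, smul_eq_mul]
  push_cast
  ring

lemma pair_trace_P {η : ℝ} {ni nj : Fin 3 → ℝ} (v : Fin 3 → ℝ) {P Q R S : Mat2}
    (hJ : IsJointMmt η ni nj P Q R S) :
    (rho v * (P + S)).trace
      = 2 * (rho v * P).trace - ((η/2 * (dot3 v ni + dot3 v nj) : ℝ) : ℂ) := by
  have hS : S = P - ((η : ℂ)/2) • (pauli ni + pauli nj) := by
    rw [jm_diff hJ]; abel
  rw [hS]
  rw [show P + (P - ((η : ℂ)/2) • (pauli ni + pauli nj))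
      = P + P - ((η : ℂ)/2) • (pauli ni + pauli nj) from by abel]
  rw [Matrix.mul_sub, Matrix.mul_add, Matrix.mul_smul, trace_sub, trace_add, trace_smul,
    Matrix.mul_add, trace_add, trace_rho_mul_pauli, trace_rho_mul_pauli, smul_eq_mul]
  push_cast
  ring

lemma pair_lb {η : ℝ} {ni nj : Fin 3 → ℝ} (v : Fin 3 → ℝ) (hv : dot3 v v ≤ 1)
    {P Q R S : Mat2} (hJ : IsJointMmt η ni nj P Q R S) :
    η/2 * (dot3 v ni + dot3 v nj) ≤ (rho v * (P + S)).trace.re := by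
  have ht := congrArg Complex.re (pair_trace_S v hJ)
  have h0 : 0 ≤ (rho v * S).trace.re :=
    trace_mul_re_nonneg _ _ (rho_posSemidef v hv) hJ.2.2.2.1.1
  simp only [Complex.add_re, Complex.mul_re, Complex.ofReal_re, Complex.ofReal_im,
    Complex.re_ofNat, Complex.im_ofNat] at ht
  rw [ht]
  linarith

lemma pair_lb' {η : ℝ} {ni nj : Fin 3 → ℝ} (v : Fin 3 → ℝ) (hv : dot3 v v ≤ 1)
    {P Q R S : Mat2} (hJ : IsJointMmt η ni nj P Q R S) :
    -(η/2 * (dot3 v ni + dot3 v nj)) ≤ (rho v * (P + S)).trace.re := by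
  have ht := congrArg Complex.re (pair_trace_P v hJ)
  have h0 : 0 ≤ (rho v * P).trace.re :=
    trace_mul_re_nonneg _ _ (rho_posSemidef v hv) hJ.1.1
  simp only [Complex.sub_re, Complex.mul_re, Complex.ofReal_re, Complex.ofReal_im,
    Complex.re_ofNat, Complex.im_ofNat] at ht
  rw [ht]
  linarith

lemma anti_eq {η : ℝ} {ni nj : Fin 3 → ℝ} (v : Fin 3 → ℝ) {P Q R S : Mat2}
    (hJ : IsJointMmt η ni nj P Q R S) :
    (rho v * (Q + R)).trace.re = 1 - (rho v * (P + S)).trace.re := by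
  obtain ⟨_, _, _, _, e1, e2, _, _⟩ := hJ
  have hsum : (P + Q) + (R + S) = 1 := by
    rw [e1, e2]
    simp only [Epos, Eneg]
    module
  have hQR : Q + R = 1 - (P + S) := by
    linear_combination (norm := abel) hsum
  rw [hQR, Matrix.mul_sub, Matrix.mul_one, trace_sub, trace_rho]
  simp [Complex.sub_re]

/-- No state-independent violation of the LSW inequality with noisy spin-1/2 qubit
observables: for any triple of unit vectors, any sharpness η ∈ (0,1], and any pairwise
joint measurements for the three pairs, some qubit state satisfies R₃(ρ) ≤ 1 - η/3. -/

theorem no_state_independent_violation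
    (n₁ n₂ n₃ : Fin 3 → ℝ) (h1 : norm3 n₁ = 1) (h2 : norm3 n₂ = 1) (h3 : norm3 n₃ = 1)
    (η : ℝ) (hη : η ∈ Set.Ioc (0 : ℝ) 1)
    (G12pp G12pm G12mp G12mm G13pp G13pm G13mp G13mm G23pp G23pm G23mp G23mm : Mat2)
    (h12 : IsJointMmt η n₁ n₂ G12pp G12pm G12mp G12mm)
    (h13 : IsJointMmt η n₁ n₃ G13pp G13pm G13mp G13mm)
    (h23 : IsJointMmt η n₂ n₃ G23pp G23pm G23mp G23mm) :
    ∃ ρ : Mat2, IsDensity ρ ∧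
      R3 ρ G12pm G12mp G13pm G13mp G23pm G23mp ≤ 1 - η / 3 := by
  obtain ⟨hη0, hη1⟩ := hη
  have hd2 : dot3 n₂ n₂ = 1 := Real.sqrt_eq_one.mp h2
  refine ⟨rho n₂, ⟨rho_posSemidef n₂ hd2.le, trace_rho n₂⟩, ?_⟩
  have b12 := pair_lb (η := η) n₂ hd2.le h12
  have b13 := pair_lb' (η := η) n₂ hd2.le h13
  have b23 := pair_lb (η := η) n₂ hd2.le h23
  have e12 := anti_eq (η := η) n₂ h12
  have e13 := anti_eq (η := η) n₂ h13
  have e23 := anti_eq (η := η) n₂ h23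
  rw [R3, e12, e13, e23]
  rw [hd2] at b12 b23
  linarith

end
end

section
/- There exist η ∈ (2/3, √3−1], unit vectors n₁, n₂, n₃ ∈ ℝ³ with n_i·n_j = −1/2 for all i ≠ j (trine spin axes), pairwise joint measurements G^{ij} of the noisy spin-1/2 observables along n_i and n_j with sharpness η for each of the three pairs, and a qubit density matrix ρ, such that R₃(ρ) > 1 − η/3. (State-dependent violation of the LSW inequality by a qubit.) -/
open Matrix ComplexOrder

noncomputable section

section AuxLSW

lemma psd2 (p r : ℝ) (q : ℂ) (hp : 0 ≤ p) (hr : 0 ≤ r) (hq : Complex.normSq q ≤ p * r) :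
    (!![(p:ℂ), q; (starRingEnd ℂ) q, (r:ℂ)]).PosSemidef := by
  refine Matrix.PosSemidef.of_dotProduct_mulVec_nonneg ?_ ?_
  · ext i j
    fin_cases i <;> fin_cases j <;>
      simp [Matrix.conjTranspose_apply, Complex.conj_ofReal]
  · intro x
    have hexp : star x ⬝ᵥ (!![(p:ℂ), q; (starRingEnd ℂ) q, (r:ℂ)]).mulVec x
        = ((p * Complex.normSq (x 0) + r * Complex.normSq (x 1)
            + 2 * (q * (starRingEnd ℂ) (x 0) * x 1).re : ℝ) : ℂ) := by
      simp [dotProduct, Matrix.mulVec, Fin.sum_univ_two, Complex.normSq_apply,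
        Complex.ext_iff, Complex.mul_re, Complex.mul_im]
      constructor <;> ring
    rw [hexp]
    rw [Complex.zero_le_real]
    set a := (x 0).re; set b := (x 0).im; set c := (x 1).re; set d := (x 1).im
    set u := q.re; set v := q.im
    have h1 : Complex.normSq q = u^2 + v^2 := by simp [Complex.normSq_apply]; ring
    have h2 : (q * (starRingEnd ℂ) (x 0) * x 1).re
        = u*(a*c+b*d) - v*(a*d-b*c) := by
      simp [Complex.mul_re, Complex.mul_im]; ring
    have h3 : Complex.normSq (x 0) = a^2 + b^2 := by simp [Complex.normSq_apply]; ring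
    have h4 : Complex.normSq (x 1) = c^2 + d^2 := by simp [Complex.normSq_apply]; ring
    rw [h2, h3, h4]
    rw [h1] at hq
    nlinarith [sq_nonneg (p*(a^2+b^2) - r*(c^2+d^2)),
      sq_nonneg (u*(a*d-b*c) + v*(a*c+b*d)),
      mul_nonneg (sub_nonneg.2 hq) (mul_nonneg (add_nonneg (sq_nonneg a) (sq_nonneg b)) (add_nonneg (sq_nonneg c) (sq_nonneg d))),
      mul_nonneg (mul_nonneg hp (add_nonneg (sq_nonneg a) (sq_nonneg b))) (mul_nonneg hr (add_nonneg (sq_nonneg c) (sq_nonneg d))),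
      mul_nonneg hp (add_nonneg (sq_nonneg a) (sq_nonneg b)),
      mul_nonneg hr (add_nonneg (sq_nonneg c) (sq_nonneg d))]

lemma pauli_add' (v w : Fin 3 → ℝ) : pauli (v + w) = pauli v + pauli w := by
  simp only [pauli, Pi.add_apply, Complex.ofReal_add]; module

lemma pauli_smul' (s : ℝ) (w : Fin 3 → ℝ) : pauli (s • w) = (s:ℂ) • pauli w := by
  simp only [pauli, Pi.smul_apply, smul_eq_mul, Complex.ofReal_mul]; module

lemma pauli_psd (c : ℝ) (v : Fin 3 → ℝ) (hc : 0 ≤ c) (h : dot3 v v ≤ c^2) :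
    ((c:ℂ) • (1:Mat2) + pauli v).PosSemidef := by
  simp only [dot3] at h
  have hv2 : |v 2| ≤ c := by
    rw [abs_le]; constructor <;> nlinarith [sq_nonneg (v 0), sq_nonneg (v 1)]
  rw [abs_le] at hv2
  have key : ((c:ℂ) • (1:Mat2) + pauli v)
      = !![(((c + v 2 : ℝ)):ℂ), ((v 0 : ℝ):ℂ) - (v 1 : ℝ) * Complex.I;
           (starRingEnd ℂ) (((v 0 : ℝ):ℂ) - (v 1 : ℝ) * Complex.I), ((c - v 2 : ℝ):ℂ)] := by
    ext i j
    fin_cases i <;> fin_cases j <;>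
      simp [pauli, σ1, σ2, σ3, Matrix.one_apply, Complex.ext_iff] <;> ring_nf
  rw [key]
  apply psd2
  · linarith [hv2.2]
  · linarith [hv2.1]
  · have hns : Complex.normSq (((v 0 : ℝ):ℂ) - (v 1 : ℝ) * Complex.I) = (v 0)^2 + (v 1)^2 := by
      simp [Complex.normSq_apply, Complex.sub_re, Complex.sub_im]; ring
    rw [hns]; nlinarith

lemma dot3_smul (s : ℝ) (v : Fin 3 → ℝ) : dot3 (s • v) (s • v) = s^2 * dot3 v v := by
  simp [dot3, Pi.smul_apply, smul_eq_mul]; ring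

lemma effect_form (c : ℝ) (v : Fin 3 → ℝ) (hc0 : 0 ≤ c) (hc2 : c ≤ 2)
    (h1 : dot3 v v ≤ c^2) (h2 : dot3 v v ≤ (2-c)^2) :
    IsEffect ((1/2 : ℂ) • (((c : ℝ) : ℂ) • (1 : Mat2) + pauli v)) := by
  constructor
  · have he : (1/2 : ℂ) • (((c : ℝ) : ℂ) • (1 : Mat2) + pauli v)
        = ((c/2 : ℝ):ℂ) • (1:Mat2) + pauli ((1/2 : ℝ) • v) := by
      rw [pauli_smul']; push_cast; module
    rw [he]
    exact pauli_psd _ _ (by linarith) (by rw [dot3_smul]; nlinarith)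
  · have he : (1:Mat2) - (1/2 : ℂ) • (((c : ℝ) : ℂ) • (1 : Mat2) + pauli v)
        = (((2-c)/2 : ℝ):ℂ) • (1:Mat2) + pauli ((-(1/2) : ℝ) • v) := by
      rw [pauli_smul']; push_cast; module
    rw [he]
    exact pauli_psd _ _ (by linarith) (by rw [dot3_smul]; nlinarith)

lemma combine (c₁ c₂ : ℝ) (v₁ v₂ : Fin 3 → ℝ) :
    (1/2:ℂ) • (((c₁:ℝ):ℂ) • (1:Mat2) + pauli v₁) + (1/2:ℂ) • (((c₂:ℝ):ℂ) • (1:Mat2) + pauli v₂)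
    = ((((c₁+c₂)/2 : ℝ)):ℂ) • (1:Mat2) + pauli ((1/2:ℝ) • (v₁+v₂)) := by
  rw [pauli_smul', pauli_add']; push_cast; module

lemma Epos_eq (η : ℝ) (n : Fin 3 → ℝ) :
    Epos η n = ((1/2 : ℝ):ℂ) • (1:Mat2) + pauli ((1/2:ℝ) • (η • n)) := by
  rw [Epos, pauli_smul', pauli_smul']; push_cast; module

lemma Eneg_eq (η : ℝ) (n : Fin 3 → ℝ) :
    Eneg η n = ((1/2 : ℝ):ℂ) • (1:Mat2) + pauli ((1/2:ℝ) • (-(η • n))) := by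
  rw [Eneg, pauli_smul', show -(η • n) = (-η) • n from (neg_smul η n).symm, pauli_smul']
  push_cast; module

variable (η α : ℝ) (ni nj a : Fin 3 → ℝ)

lemma Gsum1 : Gpp η ni nj α a + Gpm η ni nj α a = Epos η ni := by
  rw [Gpp, Gpm, combine, Epos_eq,
    show (1/2:ℝ) • (η • (ni + nj) - a) + (1/2:ℝ) • (η • (ni - nj) + a) = η • ni by module,
    show ((α/2 + (1 - α/2))/2 : ℝ) = (1/2 : ℝ) by ring]

lemma Gsum2 : Gmp η ni nj α a + Gmm η ni nj α a = Eneg η ni := by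
  rw [Gmp, Gmm, combine, Eneg_eq,
    show (1/2:ℝ) • (-(η • ni) + η • nj + a) + (1/2:ℝ) • (-(η • (ni + nj)) - a) = -(η • ni) by module,
    show ((1 - α/2 + α/2)/2 : ℝ) = (1/2 : ℝ) by ring]

lemma Gsum3 : Gpp η ni nj α a + Gmp η ni nj α a = Epos η nj := by
  rw [Gpp, Gmp, combine, Epos_eq,
    show (1/2:ℝ) • (η • (ni + nj) - a) + (1/2:ℝ) • (-(η • ni) + η • nj + a) = η • nj by module,
    show ((α/2 + (1 - α/2))/2 : ℝ) = (1/2 : ℝ) by ring]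

lemma Gsum4 : Gpm η ni nj α a + Gmm η ni nj α a = Eneg η nj := by
  rw [Gpm, Gmm, combine, Eneg_eq,
    show (1/2:ℝ) • (η • (ni - nj) + a) + (1/2:ℝ) • (-(η • (ni + nj)) - a) = -(η • nj) by module,
    show ((1 - α/2 + α/2)/2 : ℝ) = (1/2 : ℝ) by ring]

lemma Gsum5 : Gpm η ni nj α a + Gmp η ni nj α a
    = ((1 - α/2 : ℝ):ℂ) • (1:Mat2) + pauli ((1/2:ℝ) • a) := by
  rw [Gpm, Gmp, combine,
    show (1/2:ℝ) • (η • (ni - nj) + a) + (1/2:ℝ) • (-(η • ni) + η • nj + a) = a by module,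
    show ((1 - α/2 + (1 - α/2))/2 : ℝ) = (1 - α/2 : ℝ) by ring]


lemma jointMmt_of (η α : ℝ) (ni nj a : Fin 3 → ℝ) (hα0 : 0 ≤ α) (hα2 : α ≤ 2)
    (hpp : dot3 (η • (ni+nj) - a) (η • (ni+nj) - a) ≤ α^2)
    (hmm : dot3 (-(η • (ni+nj)) - a) (-(η • (ni+nj)) - a) ≤ α^2)
    (hpm : dot3 (η • (ni-nj) + a) (η • (ni-nj) + a) ≤ (2-α)^2)
    (hmp : dot3 (-(η • ni) + η • nj + a) (-(η • ni) + η • nj + a) ≤ (2-α)^2) :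
    IsJointMmt η ni nj (Gpp η ni nj α a) (Gpm η ni nj α a) (Gmp η ni nj α a) (Gmm η ni nj α a) := by
  refine ⟨?_, ?_, ?_, ?_, Gsum1 _ _ _ _ _, Gsum2 _ _ _ _ _, Gsum3 _ _ _ _ _, Gsum4 _ _ _ _ _⟩
  · rw [Gpp]
    exact effect_form _ _ (by linarith) (by linarith)
      (by rw [dot3_smul]; nlinarith) (by rw [dot3_smul]; nlinarith)
  · rw [Gpm]
    exact effect_form _ _ (by linarith) (by linarith)
      (by rw [dot3_smul]; nlinarith) (by rw [dot3_smul]; nlinarith)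
  · rw [Gmp]
    exact effect_form _ _ (by linarith) (by linarith)
      (by rw [dot3_smul]; nlinarith) (by rw [dot3_smul]; nlinarith)
  · rw [Gmm]
    exact effect_form _ _ (by linarith) (by linarith)
      (by rw [dot3_smul]; nlinarith) (by rw [dot3_smul]; nlinarith)

end AuxLSW

/-- State-dependent violation of the LSW inequality by a qubit: there are a sharpness
η ∈ (2/3, √3 - 1], trine spin axes, pairwise joint measurements for the three pairs,
and a qubit state ρ with R₃(ρ) > 1 - η/3. -/
theorem state_dependent_violation :
    ∃ η : ℝ, η ∈ Set.Ioc (2/3 : ℝ) (Real.sqrt 3 - 1) ∧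
    ∃ n₁ n₂ n₃ : Fin 3 → ℝ,
      norm3 n₁ = 1 ∧ norm3 n₂ = 1 ∧ norm3 n₃ = 1 ∧
      dot3 n₁ n₂ = -(1/2) ∧ dot3 n₁ n₃ = -(1/2) ∧ dot3 n₂ n₃ = -(1/2) ∧
    ∃ G12pp G12pm G12mp G12mm G13pp G13pm G13mp G13mm G23pp G23pm G23mp G23mm : Mat2,
      IsJointMmt η n₁ n₂ G12pp G12pm G12mp G12mm ∧
      IsJointMmt η n₁ n₃ G13pp G13pm G13mp G13mm ∧
      IsJointMmt η n₂ n₃ G23pp G23pm G23mp G23mm ∧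
    ∃ ρ : Mat2, IsDensity ρ ∧
      R3 ρ G12pm G12mp G13pm G13mp G23pm G23mp > 1 - η / 3 := by
  have h3 : Real.sqrt 3 * Real.sqrt 3 = 3 := Real.mul_self_sqrt (by norm_num)
  have hs3 : (0:ℝ) ≤ Real.sqrt 3 := Real.sqrt_nonneg 3
  refine ⟨17/25, ⟨by norm_num, by nlinarith⟩, tn1, tn2, tn3, ?_, ?_, ?_, ?_, ?_, ?_, ?_⟩
  · rw [norm3, show dot3 tn1 tn1 = 1 by norm_num [dot3, tn1, Matrix.cons_val_two, Matrix.tail_cons, Matrix.head_cons], Real.sqrt_one]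
  · rw [norm3, show dot3 tn2 tn2 = 1 by
      simp [dot3, tn2]; nlinarith, Real.sqrt_one]
  · rw [norm3, show dot3 tn3 tn3 = 1 by
      simp [dot3, tn3]; nlinarith, Real.sqrt_one]
  · norm_num [dot3, tn1, tn2, Matrix.cons_val_two, Matrix.tail_cons, Matrix.head_cons]
  · norm_num [dot3, tn1, tn3, Matrix.cons_val_two, Matrix.tail_cons, Matrix.head_cons]
  · simp [dot3, tn2, tn3]; nlinarith
  refine ⟨Gpp (17/25) tn1 tn2 (37/50) ![0,29/100,0], Gpm (17/25) tn1 tn2 (37/50) ![0,29/100,0],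
    Gmp (17/25) tn1 tn2 (37/50) ![0,29/100,0], Gmm (17/25) tn1 tn2 (37/50) ![0,29/100,0],
    Gpp (17/25) tn1 tn3 (37/50) ![0,29/100,0], Gpm (17/25) tn1 tn3 (37/50) ![0,29/100,0],
    Gmp (17/25) tn1 tn3 (37/50) ![0,29/100,0], Gmm (17/25) tn1 tn3 (37/50) ![0,29/100,0],
    Gpp (17/25) tn2 tn3 (37/50) ![0,29/100,0], Gpm (17/25) tn2 tn3 (37/50) ![0,29/100,0],
    Gmp (17/25) tn2 tn3 (37/50) ![0,29/100,0], Gmm (17/25) tn2 tn3 (37/50) ![0,29/100,0],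
    ?_, ?_, ?_, ?_⟩
  · refine jointMmt_of _ _ _ _ _ (by norm_num) (by norm_num) ?_ ?_ ?_ ?_ <;>
      (simp [dot3, tn1, tn2]; nlinarith)
  · refine jointMmt_of _ _ _ _ _ (by norm_num) (by norm_num) ?_ ?_ ?_ ?_ <;>
      (simp [dot3, tn1, tn3]; nlinarith)
  · refine jointMmt_of _ _ _ _ _ (by norm_num) (by norm_num) ?_ ?_ ?_ ?_ <;>
      (simp [dot3, tn2, tn3]; nlinarith)
  refine ⟨(1/2 : ℂ) • (((1:ℝ):ℂ) • (1:Mat2) + pauli ![0,1,0]), ⟨?_, ?_⟩, ?_⟩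
  · exact (effect_form 1 ![0,1,0] (by norm_num) (by norm_num)
      (by norm_num [dot3, Matrix.cons_val_two, Matrix.tail_cons, Matrix.head_cons]) (by norm_num [dot3, Matrix.cons_val_two, Matrix.tail_cons, Matrix.head_cons])).1
  · simp [Matrix.trace, Fin.sum_univ_two, Matrix.diag, pauli, σ1, σ2, σ3]
    ring
  · have key : (((1/2 : ℂ) • (((1:ℝ):ℂ) • (1:Mat2) + pauli ![0,1,0])) *
        (((1 - 37/50/2 : ℝ):ℂ) • (1:Mat2) + pauli ((1/2:ℝ) • ![0,29/100,0]))).trace.re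
        = 31/40 := by
      simp [Matrix.trace, Matrix.mul_apply, Fin.sum_univ_two, Matrix.diag, pauli, σ1, σ2, σ3,
        Matrix.one_apply, Complex.ext_iff]
      norm_num
    rw [R3, Gsum5, Gsum5, Gsum5, key]
    norm_num

end
end

section
/- For all η ∈ [0,1] and c ∈ [−1,1]: 1 + η⁴c² − 2η² ≥ 0 if and only if η ≤ 1/√(1 + √(1 − c²)). (With c = cos θ this says the pairwise joint-measurability condition 1 + η⁴ cos²θ − 2η² ≥ 0 is equivalent to η ≤ 1/√(1 + |sin θ|).) -/
/-- The pairwise joint-measurability condition 1 + η⁴c² - 2η² ≥ 0 (c = cos θ) is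
equivalent to η ≤ 1/√(1 + √(1 - c²)) = 1/√(1 + |sin θ|). -/
theorem pairwise_jm_condition_equiv (η c : ℝ)
    (hη : η ∈ Set.Icc (0 : ℝ) 1) (hc : c ∈ Set.Icc (-1 : ℝ) 1) :
    0 ≤ 1 + η^4 * c^2 - 2*η^2 ↔ η ≤ 1 / Real.sqrt (1 + Real.sqrt (1 - c^2)) := by
  obtain ⟨hη0, hη1⟩ := hη
  obtain ⟨hc0, hc1⟩ := hc
  set s := Real.sqrt (1 - c^2) with hs
  have hs0 : 0 ≤ s := Real.sqrt_nonneg _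
  have hs2 : s^2 = 1 - c^2 := Real.sq_sqrt (by nlinarith)
  have hs1 : s ≤ 1 := by nlinarith
  have hc2 : c^2 = 1 - s^2 := by linarith
  have key : (1-(1-s)*η^2)*(1-(1+s)*η^2) = 1 + η^4 * c^2 - 2*η^2 := by
    rw [hc2]; ring
  have h1s : (0:ℝ) < 1 + s := by linarith
  have hsq : 0 < Real.sqrt (1 + s) := Real.sqrt_pos.mpr h1s
  have hsqs : (Real.sqrt (1 + s))^2 = 1 + s := Real.sq_sqrt h1s.le
  have hse : 0 ≤ s * η^2 := mul_nonneg hs0 (sq_nonneg η)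
  constructor
  · intro h
    have hB : (1+s)*η^2 ≤ 1 := by
      have hA : (1-s)*η^2 ≤ 1 := by nlinarith
      rcases lt_or_eq_of_le hA with h' | h'
      · by_contra hcon
        push_neg at hcon
        nlinarith [mul_pos (by linarith : (0:ℝ) < 1-(1-s)*η^2)
          (by linarith : (0:ℝ) < (1+s)*η^2 - 1)]
      · nlinarith
    rw [le_div_iff₀ hsq]
    nlinarith [mul_nonneg hη0 hsq.le]
  · intro h
    have h1 : η * Real.sqrt (1+s) ≤ 1 := by rwa [← le_div_iff₀ hsq]
    have h2 : (1+s)*η^2 ≤ 1 := by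
      nlinarith [mul_nonneg hη0 hsq.le]
    nlinarith [mul_nonneg (by nlinarith : (0:ℝ) ≤ 1-(1-s)*η^2)
      (by linarith : (0:ℝ) ≤ 1-(1+s)*η^2)]
end

section
/- Let n_i, n_j be unit vectors in ℝ³ and η ∈ [0,1], with effects E^k_± = (1/2)(I ± η σ·n_k) for k ∈ {i,j}. If four qubit effects (G_{++}, G_{+-}, G_{-+}, G_{--}) form a pairwise joint measurement for the pair (i,j) (i.e., satisfy the four marginal conditions), then there exist α ∈ ℝ and a ∈ ℝ³ such that G_{++} = (1/2)[(α/2)I + σ·((η(n_i+n_j) − a)/2)], G_{+-} = (1/2)[(1−α/2)I + σ·((η(n_i−n_j) + a)/2)], G_{-+} = (1/2)[(1−α/2)I + σ·((−η n_i + η n_j + a)/2)], and G_{--} = (1/2)[(α/2)I + σ·((−η(n_i+n_j) − a)/2)]. -/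
open Matrix ComplexOrder

noncomputable section

private lemma herm_decomp (M : Mat2) (hM : M.IsHermitian) :
    ∃ (c : ℝ) (v : Fin 3 → ℝ), M = (1/2:ℂ) • ((c:ℂ) • (1:Mat2) + pauli v) := by
  refine ⟨(M 0 0).re + (M 1 1).re, ![2*(M 0 1).re, -2*(M 0 1).im, (M 0 0).re - (M 1 1).re], ?_⟩
  have h00 : (M 0 0).im = 0 := by
    have := hM.apply 0 0; rw [Complex.ext_iff] at this; simp at this; linarith
  have h11 : (M 1 1).im = 0 := by
    have := hM.apply 1 1; rw [Complex.ext_iff] at this; simp at this; linarith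
  have h10 := hM.apply 1 0
  ext i j
  fin_cases i <;> fin_cases j <;> apply Complex.ext <;>
    simp_all [pauli, σ1, σ2, σ3, Complex.ext_iff, Complex.conj_re, Complex.conj_im] <;> ring

set_option maxHeartbeats 1600000 in
/-- Every pairwise joint measurement of two noisy spin-1/2 observables is of the
parametric form, for some α ∈ ℝ and a ∈ ℝ³. -/
theorem joint_measurement_parametric_form
    (ni nj : Fin 3 → ℝ) (hi : norm3 ni = 1) (hj : norm3 nj = 1)
    (η : ℝ) (hη : η ∈ Set.Icc (0 : ℝ) 1)
    (Jpp Jpm Jmp Jmm : Mat2)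
    (h : IsJointMmt η ni nj Jpp Jpm Jmp Jmm) :
    ∃ (α : ℝ) (a : Fin 3 → ℝ),
      Jpp = Gpp η ni nj α a ∧ Jpm = Gpm η ni nj α a ∧
      Jmp = Gmp η ni nj α a ∧ Jmm = Gmm η ni nj α a := by
  obtain ⟨hpp, hpm, hmp, hmm, h1, h2, h3, h4⟩ := h
  obtain ⟨c, v, hv⟩ := herm_decomp Jpp hpp.1.isHermitian
  have hJpm : Jpm = Epos η ni - Jpp := by rw [← h1]; abel
  have hJmp : Jmp = Epos η nj - Jpp := by rw [← h3]; abel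
  have hJmm : Jmm = Eneg η nj - (Epos η ni - Jpp) := by rw [← hJpm, ← h4]; abel
  refine ⟨2*c, η • (ni + nj) - (2:ℝ) • v, ?_, ?_, ?_, ?_⟩ <;>
    simp only [hJpm, hJmp, hJmm, hv] <;> ext i j <;> fin_cases i <;> fin_cases j <;>
      apply Complex.ext <;>
      simp [Gpp, Gpm, Gmp, Gmm, Epos, Eneg, pauli, σ1, σ2, σ3, Complex.ext_iff,
        Matrix.one_apply, Matrix.smul_apply, Matrix.add_apply, Matrix.sub_apply,
        Pi.smul_apply, Pi.add_apply, Pi.sub_apply, Pi.neg_apply] <;>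
      push_cast <;> ring

end
end

section
/- Let n_i, n_j be unit vectors in ℝ³, η ∈ [0,1], α ∈ ℝ and a ∈ ℝ³, and let G_{++}, G_{+-}, G_{-+}, G_{--} be the parametric joint-measurement family with these parameters. Then all four matrices are qubit effects (0 ≤ G ≤ I) if and only if √(2η²(1 + n_i·n_j) + |a|² + 2η|(n_i+n_j)·a|) ≤ α ≤ 2 − √(2η²(1 − n_i·n_j) + |a|² + 2η|(n_i−n_j)·a|). -/
open Matrix ComplexOrder

noncomputable section

-- AUX START
lemma key_quad (A D X Y T BB : ℝ) (hA : 0 ≤ A) (hD : 0 ≤ D) (hX : 0 ≤ X) (hY : 0 ≤ Y)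
    (hBB : BB ≤ A*D) (hT : T^2 ≤ BB*X*Y) : 0 ≤ A*X + D*Y + 2*T := by
  have h1 : T^2 ≤ (A*X)*(D*Y) := by
    nlinarith [mul_nonneg (mul_nonneg hX hY) (sub_nonneg.mpr hBB)]
  have hax : 0 ≤ A*X := mul_nonneg hA hX
  have hdy : 0 ≤ D*Y := mul_nonneg hD hY
  nlinarith [sq_nonneg (A*X - D*Y), h1, hax, hdy, sq_nonneg (A*X + D*Y + 2*T)]

lemma quad_eval (a d : ℝ) (b : ℂ) (x : Fin 2 → ℂ) :
    star x ⬝ᵥ (!![(a:ℂ), b; (starRingEnd ℂ) b, (d:ℂ)] : Mat2) *ᵥ x =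
      ((a * Complex.normSq (x 0) + d * Complex.normSq (x 1)
        + 2*((b * (starRingEnd ℂ) (x 0) * (x 1)).re) : ℝ) : ℂ) := by
  apply Complex.ext <;>
    simp [dotProduct, Matrix.mulVec, Fin.sum_univ_two, Complex.normSq_apply,
      Complex.add_re, Complex.add_im, Complex.mul_re, Complex.mul_im] <;> ring

lemma psd2_iff (a d : ℝ) (b : ℂ) :
    (!![(a:ℂ), b; (starRingEnd ℂ) b, (d:ℂ)] : Mat2).PosSemidef ↔
      0 ≤ a ∧ 0 ≤ d ∧ Complex.normSq b ≤ a * d := by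
  set B := Complex.normSq b with hBdef
  have hB : 0 ≤ B := Complex.normSq_nonneg b
  constructor
  · intro h
    have hq : ∀ r s : ℝ, 0 ≤ a*(r^2*B) + d*s^2 + 2*(r*s*B) := by
      intro r s
      have h2 := h.dotProduct_mulVec_nonneg ![(r:ℂ)*b, (s:ℂ)]
      rw [quad_eval] at h2
      have h3 := Complex.zero_le_real.mp h2
      simp only [Matrix.cons_val_zero, Matrix.cons_val_one, Matrix.head_cons,
        Complex.normSq_mul, Complex.normSq_ofReal, Complex.conj_ofReal] at h3
      have he : (b * ((starRingEnd ℂ) ((r:ℂ) * b)) * (s:ℂ)).re = r*s*B := by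
        have : b * ((starRingEnd ℂ) ((r:ℂ) * b)) * (s:ℂ) = ((r*s*B : ℝ) : ℂ) := by
          rw [_root_.map_mul, Complex.conj_ofReal]
          push_cast
          rw [hBdef, ← Complex.mul_conj]
          ring
        rw [this, Complex.ofReal_re]
      rw [he] at h3
      nlinarith [h3]
    have ha : 0 ≤ a := by
      have := h.dotProduct_mulVec_nonneg ![1, 0]
      simp [dotProduct, Matrix.mulVec, Fin.sum_univ_two] at this
      exact_mod_cast this
    have hd : 0 ≤ d := by
      have := h.dotProduct_mulVec_nonneg ![0, 1]
      simp [dotProduct, Matrix.mulVec, Fin.sum_univ_two] at this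
      exact_mod_cast this
    refine ⟨ha, hd, ?_⟩
    by_contra hlt
    push_neg at hlt
    have hB0 : 0 < B := lt_of_le_of_lt (mul_nonneg ha hd) hlt
    have hBad : 0 < B*(B - a*d) := mul_pos hB0 (sub_pos.mpr hlt)
    have hd0 : d = 0 := by
      have h1 := hq d (-B)
      have : d ≤ 0 := by nlinarith [h1, hBad]
      linarith
    have ha0 : a = 0 := by
      have h1 := hq B (-(a*B))
      rw [hd0] at h1
      have : a ≤ 0 := by nlinarith [h1, mul_pos (mul_pos hB0 hB0) hB0]
      linarith
    have := hq 1 (-1)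
    rw [ha0, hd0] at this
    nlinarith [this, hB0]
  · rintro ⟨ha, hd, hb⟩
    apply PosSemidef.of_dotProduct_mulVec_nonneg
    · show _ = _
      ext i j
      fin_cases i <;> fin_cases j <;>
        simp [Matrix.conjTranspose_apply, Complex.conj_ofReal]
    · intro x
      rw [quad_eval]
      rw [Complex.zero_le_real]
      have hT : ((b * (starRingEnd ℂ) (x 0) * (x 1)).re)^2 ≤ B * Complex.normSq (x 0) * Complex.normSq (x 1) := by
        have h1 : Complex.normSq (b * (starRingEnd ℂ) (x 0) * (x 1)) = B * Complex.normSq (x 0) * Complex.normSq (x 1) := by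
          rw [Complex.normSq_mul, Complex.normSq_mul, Complex.normSq_conj]
        rw [← h1, Complex.normSq_apply]
        nlinarith [sq_nonneg (b * (starRingEnd ℂ) (x 0) * (x 1)).im]
      have := key_quad a d (Complex.normSq (x 0)) (Complex.normSq (x 1)) ((b * (starRingEnd ℂ) (x 0) * (x 1)).re) B
        ha hd (Complex.normSq_nonneg _) (Complex.normSq_nonneg _) hb hT
      linarith

lemma block_form (β : ℝ) (v : Fin 3 → ℝ) :
    (1/2 : ℂ) • ((β:ℂ) • (1 : Mat2) + pauli v) =
      !![((((β + v 2)/2 : ℝ)):ℂ), ((v 0 : ℝ):ℂ)/2 - ((v 1 : ℝ):ℂ)/2 * Complex.I;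
         ((v 0 : ℝ):ℂ)/2 + ((v 1 : ℝ):ℂ)/2 * Complex.I, (((β - v 2)/2 : ℝ):ℂ)] := by
  ext i j
  fin_cases i <;> fin_cases j <;>
    (simp [pauli, σ1, σ2, σ3, Matrix.one_apply]; push_cast; ring)

lemma conj_b (v0 v1 : ℝ) :
    (starRingEnd ℂ) ((v0:ℂ)/2 - (v1:ℂ)/2 * Complex.I) = (v0:ℂ)/2 + (v1:ℂ)/2 * Complex.I := by
  rw [map_sub, map_div₀, _root_.map_mul, map_div₀, Complex.conj_ofReal, Complex.conj_ofReal,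
    Complex.conj_I, map_ofNat]
  ring

lemma one_sub_block (β : ℝ) (v : Fin 3 → ℝ) :
    (1 : Mat2) - (1/2 : ℂ) • ((β:ℂ) • (1 : Mat2) + pauli v) =
      (1/2 : ℂ) • ((((2 - β : ℝ)):ℂ) • (1 : Mat2) + pauli (-v)) := by
  have hneg : pauli (-v) = -pauli v := by
    simp only [pauli, Pi.neg_apply, Complex.ofReal_neg, neg_smul]
    abel
  rw [hneg]
  module

lemma psd_block_iff (β : ℝ) (v : Fin 3 → ℝ) :
    ((1/2:ℂ) • ((β:ℂ) • (1:Mat2) + pauli v)).PosSemidef ↔ (0 ≤ β ∧ dot3 v v ≤ β^2) := by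
  rw [block_form,
    show ((v 0:ℝ):ℂ)/2 + ((v 1:ℝ):ℂ)/2*Complex.I
      = (starRingEnd ℂ) (((v 0:ℝ):ℂ)/2 - ((v 1:ℝ):ℂ)/2*Complex.I) from (conj_b _ _).symm,
    psd2_iff]
  have hn : Complex.normSq (((v 0:ℝ):ℂ)/2 - ((v 1:ℝ):ℂ)/2*Complex.I) = (v 0^2 + v 1^2)/4 := by
    rw [Complex.normSq_apply]
    simp
    ring
  rw [hn]
  unfold dot3
  constructor
  · rintro ⟨h1,h2,h3⟩
    constructor <;> nlinarith [h1, h2, h3]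
  · rintro ⟨h1,h2⟩
    refine ⟨?_,?_,?_⟩ <;>
      nlinarith [h1, h2, mul_self_nonneg (v 0), mul_self_nonneg (v 1), mul_self_nonneg (v 2)]

lemma dot3_neg (v : Fin 3 → ℝ) : dot3 (-v) (-v) = dot3 v v := by
  unfold dot3; simp

lemma effect_block_iff (β : ℝ) (v : Fin 3 → ℝ) :
    IsEffect ((1/2:ℂ) • ((β:ℂ) • (1:Mat2) + pauli v)) ↔
      ((0 ≤ β ∧ dot3 v v ≤ β^2) ∧ (0 ≤ 2-β ∧ dot3 v v ≤ (2-β)^2)) := by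
  unfold IsEffect
  rw [psd_block_iff, one_sub_block, psd_block_iff, dot3_neg]

lemma dot3_self_nonneg (v : Fin 3 → ℝ) : 0 ≤ dot3 v v := by
  unfold dot3
  nlinarith [mul_self_nonneg (v 0), mul_self_nonneg (v 1), mul_self_nonneg (v 2)]

lemma sqrt_le_iff' (x y : ℝ) (hx : 0 ≤ x) : Real.sqrt x ≤ y ↔ (0 ≤ y ∧ x ≤ y^2) := by
  constructor
  · intro h
    refine ⟨le_trans (Real.sqrt_nonneg x) h, ?_⟩
    nlinarith [Real.sq_sqrt hx, Real.sqrt_nonneg x]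
  · rintro ⟨hy, hxy⟩
    calc Real.sqrt x ≤ Real.sqrt (y^2) := Real.sqrt_le_sqrt hxy
    _ = y := by rw [Real.sqrt_sq hy]

lemma le_two_sub_sqrt_iff (x y : ℝ) (hx : 0 ≤ x) :
    y ≤ 2 - Real.sqrt x ↔ (0 ≤ 2 - y ∧ x ≤ (2-y)^2) := by
  rw [show (y ≤ 2 - Real.sqrt x) ↔ (Real.sqrt x ≤ 2 - y) from
    ⟨fun h => by linarith, fun h => by linarith⟩, sqrt_le_iff' x (2-y) hx]

-- AUX END

set_option maxHeartbeats 2000000 in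
/-- The four matrices of the parametric joint-measurement family are all qubit effects
iff √(2η²(1 + nᵢ·nⱼ) + |a|² + 2η|(nᵢ+nⱼ)·a|) ≤ α ≤
2 - √(2η²(1 - nᵢ·nⱼ) + |a|² + 2η|(nᵢ-nⱼ)·a|). -/
theorem parametric_family_effects_iff
    (ni nj : Fin 3 → ℝ) (hi : norm3 ni = 1) (hj : norm3 nj = 1)
    (η : ℝ) (hη : η ∈ Set.Icc (0 : ℝ) 1) (α : ℝ) (a : Fin 3 → ℝ) :
    (IsEffect (Gpp η ni nj α a) ∧ IsEffect (Gpm η ni nj α a) ∧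
     IsEffect (Gmp η ni nj α a) ∧ IsEffect (Gmm η ni nj α a)) ↔
    (Real.sqrt (2*η^2*(1 + dot3 ni nj) + (norm3 a)^2 + 2*η*|dot3 (ni + nj) a|) ≤ α ∧
     α ≤ 2 - Real.sqrt (2*η^2*(1 - dot3 ni nj) + (norm3 a)^2 + 2*η*|dot3 (ni - nj) a|)) := by
  obtain ⟨hη0, hη1⟩ := hη
  have hii : dot3 ni ni = 1 := by
    have h := Real.sq_sqrt (dot3_self_nonneg ni)
    unfold norm3 at hi
    rw [hi] at h
    linarith [h]
  have hjj : dot3 nj nj = 1 := by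
    have h := Real.sq_sqrt (dot3_self_nonneg nj)
    unfold norm3 at hj
    rw [hj] at h
    linarith [h]
  have hsa : (norm3 a)^2 = dot3 a a := Real.sq_sqrt (dot3_self_nonneg a)
  have e1 : dot3 ((1/2 : ℝ) • (η • (ni + nj) - a)) ((1/2 : ℝ) • (η • (ni + nj) - a))
      = (2*η^2*(1 + dot3 ni nj) + dot3 a a - 2*η*(dot3 (ni + nj) a))/4 := by
    simp only [dot3, Pi.add_apply, Pi.sub_apply, Pi.neg_apply, Pi.smul_apply, smul_eq_mul] at hii hjj ⊢
    linear_combination (η^2/4)*hii + (η^2/4)*hjj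
  have e2 : dot3 ((1/2 : ℝ) • (η • (ni - nj) + a)) ((1/2 : ℝ) • (η • (ni - nj) + a))
      = (2*η^2*(1 - dot3 ni nj) + dot3 a a + 2*η*(dot3 (ni - nj) a))/4 := by
    simp only [dot3, Pi.add_apply, Pi.sub_apply, Pi.neg_apply, Pi.smul_apply, smul_eq_mul] at hii hjj ⊢
    linear_combination (η^2/4)*hii + (η^2/4)*hjj
  have e3 : dot3 ((1/2 : ℝ) • (-(η • ni) + η • nj + a)) ((1/2 : ℝ) • (-(η • ni) + η • nj + a))
      = (2*η^2*(1 - dot3 ni nj) + dot3 a a - 2*η*(dot3 (ni - nj) a))/4 := by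
    simp only [dot3, Pi.add_apply, Pi.sub_apply, Pi.neg_apply, Pi.smul_apply, smul_eq_mul] at hii hjj ⊢
    linear_combination (η^2/4)*hii + (η^2/4)*hjj
  have e4 : dot3 ((1/2 : ℝ) • (-(η • (ni + nj)) - a)) ((1/2 : ℝ) • (-(η • (ni + nj)) - a))
      = (2*η^2*(1 + dot3 ni nj) + dot3 a a + 2*η*(dot3 (ni + nj) a))/4 := by
    simp only [dot3, Pi.add_apply, Pi.sub_apply, Pi.neg_apply, Pi.smul_apply, smul_eq_mul] at hii hjj ⊢
    linear_combination (η^2/4)*hii + (η^2/4)*hjj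
  have hA : 0 ≤ 2*η^2*(1 + dot3 ni nj) + dot3 a a + 2*η*|dot3 (ni + nj) a| := by
    have h4 := dot3_self_nonneg ((1/2 : ℝ) • (η • (ni + nj) - a))
    rw [e1] at h4
    nlinarith [h4, mul_le_mul_of_nonneg_left (neg_abs_le (dot3 (ni + nj) a)) hη0]
  have hB : 0 ≤ 2*η^2*(1 - dot3 ni nj) + dot3 a a + 2*η*|dot3 (ni - nj) a| := by
    have h4 := dot3_self_nonneg ((1/2 : ℝ) • (-(η • ni) + η • nj + a))
    rw [e3] at h4
    nlinarith [h4, mul_le_mul_of_nonneg_left (neg_abs_le (dot3 (ni - nj) a)) hη0]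
  simp only [Gpp, Gpm, Gmp, Gmm]
  rw [effect_block_iff, effect_block_iff, effect_block_iff, effect_block_iff,
    e1, e2, e3, e4, hsa, sqrt_le_iff' _ _ hA, le_two_sub_sqrt_iff _ _ hB]
  clear e1 e2 e3 e4 hA hB hsa hii hjj hi hj
  rcases abs_cases (dot3 (ni + nj) a) with ⟨hc1, hc1s⟩ | ⟨hc1, hc1s⟩ <;>
    rcases abs_cases (dot3 (ni - nj) a) with ⟨hc2, hc2s⟩ | ⟨hc2, hc2s⟩ <;>
    rw [hc1, hc2]
  · have s1 : 0 ≤ η * dot3 (ni + nj) a := mul_nonneg hη0 hc1s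
    have s2 : 0 ≤ η * dot3 (ni - nj) a := mul_nonneg hη0 hc2s
    constructor
    · rintro ⟨⟨⟨a1, a2⟩, a3, a4⟩, ⟨⟨b1, b2⟩, b3, b4⟩, ⟨⟨g1, g2⟩, g3, g4⟩, ⟨⟨d1, d2⟩, d3, d4⟩⟩
      exact ⟨⟨by linarith, by nlinarith [a2, d2]⟩, by linarith, by nlinarith [b2, g2]⟩
    · rintro ⟨⟨h1, h2⟩, h3, h4⟩
      exact ⟨⟨⟨by linarith, by nlinarith [h2, s1]⟩, by linarith, by nlinarith [h2, s1]⟩,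
        ⟨⟨by linarith, by nlinarith [h4, s2]⟩, by linarith, by nlinarith [h4, s2]⟩,
        ⟨⟨by linarith, by nlinarith [h4, s2]⟩, by linarith, by nlinarith [h4, s2]⟩,
        ⟨⟨by linarith, by nlinarith [h2, s1]⟩, by linarith, by nlinarith [h2, s1]⟩⟩
  · have s1 : 0 ≤ η * dot3 (ni + nj) a := mul_nonneg hη0 hc1s
    have s2 : η * dot3 (ni - nj) a ≤ 0 := mul_nonpos_of_nonneg_of_nonpos hη0 hc2s.le
    constructor
    · rintro ⟨⟨⟨a1, a2⟩, a3, a4⟩, ⟨⟨b1, b2⟩, b3, b4⟩, ⟨⟨g1, g2⟩, g3, g4⟩, ⟨⟨d1, d2⟩, d3, d4⟩⟩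
      exact ⟨⟨by linarith, by nlinarith [a2, d2]⟩, by linarith, by nlinarith [b2, g2]⟩
    · rintro ⟨⟨h1, h2⟩, h3, h4⟩
      exact ⟨⟨⟨by linarith, by nlinarith [h2, s1]⟩, by linarith, by nlinarith [h2, s1]⟩,
        ⟨⟨by linarith, by nlinarith [h4, s2]⟩, by linarith, by nlinarith [h4, s2]⟩,
        ⟨⟨by linarith, by nlinarith [h4, s2]⟩, by linarith, by nlinarith [h4, s2]⟩,
        ⟨⟨by linarith, by nlinarith [h2, s1]⟩, by linarith, by nlinarith [h2, s1]⟩⟩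
  · have s1 : η * dot3 (ni + nj) a ≤ 0 := mul_nonpos_of_nonneg_of_nonpos hη0 hc1s.le
    have s2 : 0 ≤ η * dot3 (ni - nj) a := mul_nonneg hη0 hc2s
    constructor
    · rintro ⟨⟨⟨a1, a2⟩, a3, a4⟩, ⟨⟨b1, b2⟩, b3, b4⟩, ⟨⟨g1, g2⟩, g3, g4⟩, ⟨⟨d1, d2⟩, d3, d4⟩⟩
      exact ⟨⟨by linarith, by nlinarith [a2, d2]⟩, by linarith, by nlinarith [b2, g2]⟩
    · rintro ⟨⟨h1, h2⟩, h3, h4⟩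
      exact ⟨⟨⟨by linarith, by nlinarith [h2, s1]⟩, by linarith, by nlinarith [h2, s1]⟩,
        ⟨⟨by linarith, by nlinarith [h4, s2]⟩, by linarith, by nlinarith [h4, s2]⟩,
        ⟨⟨by linarith, by nlinarith [h4, s2]⟩, by linarith, by nlinarith [h4, s2]⟩,
        ⟨⟨by linarith, by nlinarith [h2, s1]⟩, by linarith, by nlinarith [h2, s1]⟩⟩
  · have s1 : η * dot3 (ni + nj) a ≤ 0 := mul_nonpos_of_nonneg_of_nonpos hη0 hc1s.le
    have s2 : η * dot3 (ni - nj) a ≤ 0 := mul_nonpos_of_nonneg_of_nonpos hη0 hc2s.le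
    constructor
    · rintro ⟨⟨⟨a1, a2⟩, a3, a4⟩, ⟨⟨b1, b2⟩, b3, b4⟩, ⟨⟨g1, g2⟩, g3, g4⟩, ⟨⟨d1, d2⟩, d3, d4⟩⟩
      exact ⟨⟨by linarith, by nlinarith [a2, d2]⟩, by linarith, by nlinarith [b2, g2]⟩
    · rintro ⟨⟨h1, h2⟩, h3, h4⟩
      exact ⟨⟨⟨by linarith, by nlinarith [h2, s1]⟩, by linarith, by nlinarith [h2, s1]⟩,
        ⟨⟨by linarith, by nlinarith [h4, s2]⟩, by linarith, by nlinarith [h4, s2]⟩,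
        ⟨⟨by linarith, by nlinarith [h4, s2]⟩, by linarith, by nlinarith [h4, s2]⟩,
        ⟨⟨by linarith, by nlinarith [h2, s1]⟩, by linarith, by nlinarith [h2, s1]⟩⟩


end
end

section
/- For all real numbers a and b with 0 < a < π/2 and 0 < b < π/2, one has cos a + cos b + |cos(a + b)| > 1. -/
open Real

lemma sin_add_cos_gt_one {x : ℝ} (h0 : 0 < x) (h : x < Real.pi / 2) :
    1 < Real.sin x + Real.cos x := by
  have hs : 0 < Real.sin x := Real.sin_pos_of_pos_of_lt_pi h0 (by linarith [Real.pi_pos])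
  have hc : 0 < Real.cos x := Real.cos_pos_of_mem_Ioo ⟨by linarith [Real.pi_pos], h⟩
  nlinarith [Real.sin_sq_add_cos_sq x]

/-- For 0 < a < π/2 and 0 < b < π/2 one has cos a + cos b + |cos(a+b)| > 1. -/
theorem cos_sum_gt_one (a b : ℝ) (ha0 : 0 < a) (ha : a < Real.pi / 2)
    (hb0 : 0 < b) (hb : b < Real.pi / 2) :
    1 < Real.cos a + Real.cos b + |Real.cos (a + b)| := by
  have hsa := sin_add_cos_gt_one ha0 ha
  have hsb := sin_add_cos_gt_one hb0 hb
  have hsapos : 0 < Real.sin a := Real.sin_pos_of_pos_of_lt_pi ha0 (by linarith [Real.pi_pos])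
  have hsbpos : 0 < Real.sin b := Real.sin_pos_of_pos_of_lt_pi hb0 (by linarith [Real.pi_pos])
  rcases le_or_gt (a + b) (Real.pi / 2) with h | h
  · -- cos b ≥ sin a, so cos a + cos b > 1
    have hcb : Real.cos (Real.pi / 2 - a) ≤ Real.cos b := by
      apply Real.cos_le_cos_of_nonneg_of_le_pi (le_of_lt hb0) (by linarith [Real.pi_pos])
      linarith
    rw [Real.cos_pi_div_two_sub] at hcb
    have := abs_nonneg (Real.cos (a + b))
    linarith
  · have hcneg : Real.cos (a + b) < 0 :=
      Real.cos_neg_of_pi_div_two_lt_of_lt h (by linarith [Real.pi_pos])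
    rw [abs_of_neg hcneg, Real.cos_add]
    have hca1 : Real.cos a < 1 := by
      nlinarith [Real.sin_sq_add_cos_sq a, hsapos]
    have hcb1 : Real.cos b < 1 := by
      nlinarith [Real.sin_sq_add_cos_sq b, hsbpos]
    nlinarith [mul_lt_mul'' (by linarith : 1 - Real.cos a < Real.sin a)
      (by linarith : 1 - Real.cos b < Real.sin b) (by linarith) (by linarith)]
end

section
/- Let (Ω, μ) be a probability space, let f₁, f₂, f₃ : Ω → {+1, −1} be measurable functions, and let η ∈ [0,1]. Then (1/3)·Σ_{(ij) ∈ {(12),(13),(23)}} (η·μ{ω : f_i(ω) ≠ f_j(ω)} + (1 − η)) ≤ 1 − η/3. (The LSW bound: in the generalized-noncontextual model of Specker's scenario, each pair's anticorrelation probability equals η times the probability that the deterministic assignments disagree, plus (1 − η) from the noise coin flip, and the average of these three quantities is at most 1 − η/3.) -/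
open MeasureTheory

/-- The LSW bound in Specker's scenario: in the generalized-noncontextual model, each
pair's anticorrelation probability is η times the probability that the deterministic
assignments disagree plus (1 - η) from the noise coin flip, and the average over the
three pairs is at most 1 - η/3. -/
theorem lsw_noncontextual_bound {Ω : Type*} [MeasurableSpace Ω]
    (μ : Measure Ω) [IsProbabilityMeasure μ]
    (f₁ f₂ f₃ : Ω → ℝ)
    (m₁ : Measurable f₁) (m₂ : Measurable f₂) (m₃ : Measurable f₃)
    (r₁ : ∀ ω, f₁ ω = 1 ∨ f₁ ω = -1)
    (r₂ : ∀ ω, f₂ ω = 1 ∨ f₂ ω = -1)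
    (r₃ : ∀ ω, f₃ ω = 1 ∨ f₃ ω = -1)
    (η : ℝ) (hη : η ∈ Set.Icc (0 : ℝ) 1) :
    (1/3 : ℝ) * ((η * (μ {ω | f₁ ω ≠ f₂ ω}).toReal + (1 - η)) +
      (η * (μ {ω | f₁ ω ≠ f₃ ω}).toReal + (1 - η)) +
      (η * (μ {ω | f₂ ω ≠ f₃ ω}).toReal + (1 - η))) ≤ 1 - η/3 := by
  set A := {ω | f₁ ω ≠ f₂ ω} with hA
  set B := {ω | f₁ ω ≠ f₃ ω} with hB
  set C := {ω | f₂ ω ≠ f₃ ω} with hC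
  have mA : MeasurableSet A := (measurableSet_eq_fun m₁ m₂).compl
  have mB : MeasurableSet B := (measurableSet_eq_fun m₁ m₃).compl
  have mC : MeasurableSet C := (measurableSet_eq_fun m₂ m₃).compl
  have hempty : A ∩ B ∩ C = ∅ := by
    ext ω
    simp only [Set.mem_inter_iff, Set.mem_empty_iff_false, iff_false, not_and, hA, hB, hC,
      Set.mem_setOf_eq, ne_eq, not_not]
    rintro ⟨h1, h2⟩
    rcases r₁ ω with h | h <;> rcases r₂ ω with h' | h' <;> rcases r₃ ω with h'' | h'' <;>
      simp_all
  have key : μ A + μ B + μ C ≤ 2 := by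
    have e1 : μ (A ∪ B) + μ (A ∩ B) = μ A + μ B := measure_union_add_inter A mB
    have e2 : μ ((A ∩ B) ∪ C) + μ ((A ∩ B) ∩ C) = μ (A ∩ B) + μ C :=
      measure_union_add_inter (A ∩ B) mC
    have e3 : μ ((A ∩ B) ∩ C) = 0 := by rw [hempty]; simp
    calc μ A + μ B + μ C = μ (A ∪ B) + (μ ((A ∩ B) ∪ C) + μ ((A ∩ B) ∩ C)) := by
          rw [e2, ← e1]; ring
      _ = μ (A ∪ B) + μ ((A ∩ B) ∪ C) := by rw [e3, add_zero]
      _ ≤ 1 + 1 := add_le_add prob_le_one prob_le_one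
      _ = 2 := one_add_one_eq_two
  have fA : μ A ≠ ⊤ := measure_ne_top μ A
  have fB : μ B ≠ ⊤ := measure_ne_top μ B
  have fC : μ C ≠ ⊤ := measure_ne_top μ C
  have key' : (μ A).toReal + (μ B).toReal + (μ C).toReal ≤ 2 := by
    have h2 : ((μ A + μ B + μ C)).toReal ≤ ((2 : ENNReal)).toReal :=
      ENNReal.toReal_mono (by norm_num) key
    rwa [ENNReal.toReal_add (by finiteness) fC, ENNReal.toReal_add fA fB,
      ENNReal.toReal_ofNat] at h2
  obtain ⟨h0, h1⟩ := hη
  have nA : 0 ≤ (μ A).toReal := ENNReal.toReal_nonneg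
  have nB : 0 ≤ (μ B).toReal := ENNReal.toReal_nonneg
  have nC : 0 ≤ (μ C).toReal := ENNReal.toReal_nonneg
  nlinarith [mul_le_mul_of_nonneg_left key' h0]
end
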